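/- Let E, F, G, H be vector lattices with E a sublattice of F and G an ideal of H, where E is F-Dedekind complete and G is H-Dedekind complete. A positive linear operator T : E → G is FH-order continuous (i.e., x_α →(Fo) 0 in E implies Tx_α →(Ho) 0 in G) if and only if for every net {x_α} in E with x_α ↓ and inf x_α = 0 in F, one has Tx_α ↓ and inf Tx_α = 0 in H. -/
import Mathlib


/-- A net `x` in a vector lattice `F` is `F`-order convergent to `a`: there is a
nonempty downward-directed family `D` in `F` with infimum `0` (the range of a net
`y_β ↓ 0` in `F`) such that for each `d ∈ D`, eventually `|x α - a| ≤ d`. -/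
def FOrderConv {F : Type*} [Lattice F] [AddCommGroup F] {ι : Type*} [Preorder ι]
    (x : ι → F) (a : F) : Prop :=
  ∃ D : Set F, D.Nonempty ∧ DirectedOn (· ≥ ·) D ∧ IsGLB D 0 ∧
    ∀ d ∈ D, ∃ α₀ : ι, ∀ α, α₀ ≤ α → |x α - a| ≤ d

/-- Order convergence relative to a sublattice `E` of `F`: the dominating family lies
in `E` and decreases to `0` *in `E`* (`0` is its greatest lower bound among elements
of `E`). -/
def OrderConvIn {F : Type*} [Lattice F] [AddCommGroup F] (E : Set F) {ι : Type*} [Preorder ι]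
    (x : ι → F) (a : F) : Prop :=
  ∃ D : Set F, D ⊆ E ∧ D.Nonempty ∧ DirectedOn (· ≥ ·) D ∧
    (0 ∈ lowerBounds D ∧ ∀ b ∈ E, b ∈ lowerBounds D → b ≤ 0) ∧
    ∀ d ∈ D, ∃ α₀ : ι, ∀ α, α₀ ≤ α → |x α - a| ≤ d

/-- Let `E ⊆ F` be an `F`-Dedekind complete sublattice (a linear sublattice, given as a
submodule closed under `⊔` and `⊓`), and `G ⊆ H` an `H`-Dedekind complete ideal.
A positive linear operator `T : E → G` is `FH`-order continuous iff for every net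
`{x_α}` in `E` with `x_α ↓` and `inf x_α = 0` in `F`, one has `Tx_α ↓` and
`inf Tx_α = 0` in `H`. -/
theorem fhOrderContinuous_iff_downward
    {F H : Type*} [Lattice F] [AddCommGroup F] [CovariantClass F F (· + ·) (· ≤ ·)]
    [Module ℝ F] [Lattice H] [AddCommGroup H] [CovariantClass H H (· + ·) (· ≤ ·)]
    [Module ℝ H]
    (E : Submodule ℝ F)
    (hEsup : ∀ a ∈ E, ∀ b ∈ E, a ⊔ b ∈ E) (hEinf : ∀ a ∈ E, ∀ b ∈ E, a ⊓ b ∈ E)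
    (G : Set H)
    (hGsolid : ∀ u v : H, |u| ≤ |v| → v ∈ G → u ∈ G)
    (hGadd : ∀ a ∈ G, ∀ b ∈ G, a + b ∈ G) (hGsmul : ∀ (c : ℝ), ∀ a ∈ G, c • a ∈ G)
    (hEFDC : ∀ A : Set F, A ⊆ (E : Set F) → A.Nonempty → BddAbove A → ∃ s ∈ E, IsLUB A s)
    (hGHDC : ∀ A : Set H, A ⊆ G → A.Nonempty → BddAbove A → ∃ s ∈ G, IsLUB A s)
    (T : E →ₗ[ℝ] H) (hTG : ∀ v : E, T v ∈ G)
    (hTpos : ∀ v : E, (0 : F) ≤ (v : F) → 0 ≤ T v) :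
    (∀ (ι : Type) [Preorder ι] [Nonempty ι] [IsDirected ι (· ≤ ·)] (x : ι → E),
        FOrderConv (fun α => (x α : F)) 0 → FOrderConv (fun α => T (x α)) 0) ↔
    (∀ (ι : Type) [Preorder ι] [Nonempty ι] [IsDirected ι (· ≤ ·)] (x : ι → E),
        Antitone (fun α => (x α : F)) → IsGLB (Set.range fun α => (x α : F)) 0 →
        Antitone (fun α => T (x α)) ∧ IsGLB (Set.range fun α => T (x α)) 0) := by

  classical
  -- T is monotone
  have hTmono : ∀ u v : E, (u : F) ≤ (v : F) → T u ≤ T v := by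
    intro u v huv
    have h0 : (0 : F) ≤ ((v - u : E) : F) := by
      push_cast; exact sub_nonneg.mpr huv
    have := hTpos _ h0
    rw [← sub_nonneg, ← map_sub]
    exact this
  have habsE : ∀ v : E, |(v : F)| ∈ E := by
    intro v
    rw [abs]
    exact hEsup _ v.2 _ (E.neg_mem v.2)
  have habsT : ∀ v : E, |T v| ≤ T ⟨|(v : F)|, habsE v⟩ := by
    intro v
    rw [abs_le']
    refine ⟨hTmono _ _ (le_abs_self _), ?_⟩
    rw [← map_neg]
    refine hTmono _ _ ?_
    simpa using neg_le_abs (v : F)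
  constructor
  · intro hcont ι _ _ _ x hx hglb
    have hlb0 : ∀ α, (0 : F) ≤ (x α : F) := fun α => hglb.1 ⟨α, rfl⟩
    have hmono : Antitone (fun α => T (x α)) := fun a b hab => hTmono _ _ (hx hab)
    refine ⟨hmono, ?_, ?_⟩
    · rintro _ ⟨α, rfl⟩
      exact hTpos _ (hlb0 α)
    · intro b hb
      have hfo : FOrderConv (fun α => (x α : F)) 0 := by
        refine ⟨Set.range (fun α => (x α : F)), Set.range_nonempty _, ?_,
          by simpa using hglb, ?_⟩
        · rintro _ ⟨a, rfl⟩ _ ⟨c, rfl⟩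
          obtain ⟨e, he1, he2⟩ := directed_of (· ≤ ·) a c
          exact ⟨x e, ⟨e, rfl⟩, hx he1, hx he2⟩
        · rintro _ ⟨a, rfl⟩
          exact ⟨a, fun β hβ => by
            rw [sub_zero, abs_of_nonneg (hlb0 β)]; exact hx hβ⟩
      obtain ⟨D, hDne, hDdir, hDglb, hDev⟩ := hcont ι x hfo
      refine hDglb.2 fun d hd => ?_
      obtain ⟨α₀, hα₀⟩ := hDev d hd
      calc b ≤ T (x α₀) := hb ⟨α₀, rfl⟩
        _ ≤ |T (x α₀) - 0| := by rw [sub_zero]; exact le_abs_self _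
        _ ≤ d := hα₀ α₀ le_rfl
  · rintro hdown ι _ _ _ x ⟨D, hDne, hDdir, hDglb, hDev⟩
    -- the index set for the dominating net in E
    set Λ := {α : ι // ∃ d ∈ D, ∀ β, α ≤ β → |(x β : F)| ≤ d} with hΛ
    have hΛup : ∀ (a : Λ) (c : ι), a.1 ≤ c →
        ∃ d ∈ D, ∀ β, c ≤ β → |(x β : F)| ≤ d := by
      rintro ⟨a, d, hd, hbd⟩ c hac
      exact ⟨d, hd, fun β hβ => hbd β (le_trans hac hβ)⟩
    haveI : Nonempty Λ := by
      obtain ⟨d, hd⟩ := hDne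
      obtain ⟨α₀, hα₀⟩ := hDev d hd
      exact ⟨⟨α₀, d, hd, fun β hβ => by simpa using hα₀ β hβ⟩⟩
    haveI : IsDirected Λ (· ≤ ·) := by
      constructor
      rintro a b
      obtain ⟨c, hc1, hc2⟩ := directed_of (· ≤ ·) a.1 b.1
      exact ⟨⟨c, hΛup a c hc1⟩, hc1, hc2⟩
    -- the dominating net: y α = sup of {|x β| : α ≤ β}
    have key : ∀ a : Λ, ∃ s : E, IsLUB {v : F | ∃ β, a.1 ≤ β ∧ v = |(x β : F)|} (s : F) := by
      rintro ⟨a, d, hd, hbd⟩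
      obtain ⟨s, hsE, hslub⟩ := hEFDC {v : F | ∃ β, a ≤ β ∧ v = |(x β : F)|}
        (by rintro v ⟨β, hβ, rfl⟩; exact habsE (x β))
        ⟨|(x a : F)|, a, le_rfl, rfl⟩
        ⟨d, by rintro v ⟨β, hβ, rfl⟩; exact hbd β hβ⟩
      exact ⟨⟨s, hsE⟩, hslub⟩
    choose y hy using key
    have hymem : ∀ (a : Λ) (β : ι), a.1 ≤ β → |(x β : F)| ≤ (y a : F) :=
      fun a β hβ => (hy a).1 ⟨β, hβ, rfl⟩
    have hyanti : Antitone (fun a : Λ => (y a : F)) := by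
      intro a b hab
      refine (hy b).2 ?_
      rintro v ⟨β, hβ, rfl⟩
      exact hymem a β (le_trans hab hβ)
    have hyglb : IsGLB (Set.range fun a : Λ => (y a : F)) 0 := by
      constructor
      · rintro _ ⟨a, rfl⟩
        exact le_trans (abs_nonneg _) (hymem a a.1 le_rfl)
      · intro b hb
        refine hDglb.2 fun d hd => ?_
        obtain ⟨α₀, hα₀⟩ := hDev d hd
        have hmem : ∃ d' ∈ D, ∀ β, α₀ ≤ β → |(x β : F)| ≤ d' :=
          ⟨d, hd, fun β hβ => by simpa using hα₀ β hβ⟩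
        have hle : (y ⟨α₀, hmem⟩ : F) ≤ d := by
          refine (hy ⟨α₀, hmem⟩).2 ?_
          rintro v ⟨β, hβ, rfl⟩
          simpa using hα₀ β hβ
        exact le_trans (hb ⟨⟨α₀, hmem⟩, rfl⟩) hle
    obtain ⟨hTyanti, hTyglb⟩ := hdown Λ y hyanti hyglb
    refine ⟨Set.range (fun a : Λ => T (y a)), Set.range_nonempty _, ?_, hTyglb, ?_⟩
    · rintro _ ⟨a, rfl⟩ _ ⟨b, rfl⟩
      obtain ⟨c, hc1, hc2⟩ := directed_of (· ≤ ·) a b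
      exact ⟨T (y c), ⟨c, rfl⟩, hTyanti hc1, hTyanti hc2⟩
    · rintro _ ⟨a, rfl⟩
      refine ⟨a.1, fun β hβ => ?_⟩
      rw [sub_zero]
      calc |T (x β)| ≤ T ⟨|(x β : F)|, habsE (x β)⟩ := habsT (x β)
        _ ≤ T (y a) := hTmono _ _ (hymem a β hβ)
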